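/- Let E be a Banach lattice, x = (x_j) ∈ λ_π(E)⁺ with x_j ≠ 0 for all j, ℕ = ⋃_i ℕ_i a partition into pairwise disjoint infinite sets ℕ_i = {i_1 < i_2 < ...}, and define y_i ∈ λ_π(E) by placing x_j in coordinate i_j and 0 elsewhere. Then the map T : ℓ_1 → λ_π(E), T((a_i)) = Σ_i a_i y_i, is a well-defined injective bounded linear operator and a Riesz homomorphism, so its closure of range is a closed infinite-dimensional sublattice of λ_π(E). -/

import Mathlib

open Filter

/-- A Banach lattice of real sequences, with the coordinatewise order, described by a
membership predicate and a norm. -/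
structure SeqBanachLattice where
  mem : (ℕ → ℝ) → Prop
  nrm : (ℕ → ℝ) → ℝ
  zero_mem : mem 0
  add_mem : ∀ a b, mem a → mem b → mem (a + b)
  smul_mem : ∀ (c : ℝ) a, mem a → mem (c • a)
  single_mem : ∀ j, mem (Pi.single j 1)
  nrm_nonneg : ∀ a, 0 ≤ nrm a
  nrm_eq_zero : ∀ a, mem a → (nrm a = 0 ↔ a = 0)
  nrm_add_le : ∀ a b, mem a → mem b → nrm (a + b) ≤ nrm a + nrm b
  nrm_smul : ∀ (c : ℝ) a, mem a → nrm (c • a) = |c| * nrm a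
  solid : ∀ a b, mem b → (∀ j, |a j| ≤ |b j|) → mem a ∧ nrm a ≤ nrm b
  complete : ∀ f : ℕ → (ℕ → ℝ), (∀ n, mem (f n)) →
    (∀ ε : ℝ, 0 < ε → ∃ N, ∀ n m, N ≤ n → N ≤ m → nrm (f n - f m) < ε) →
    ∃ g, mem g ∧ Tendsto (fun n => nrm (f n - g)) atTop (nhds 0)

/-- A KB-space of real sequences: a sequence Banach lattice in which every norm-bounded
increasing positive sequence is norm convergent. -/
structure SeqKBLattice extends SeqBanachLattice where
  kb : ∀ f : ℕ → (ℕ → ℝ), (∀ n, mem (f n)) → (∀ n j, 0 ≤ f n j) →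
    (∀ n m, n ≤ m → ∀ j, f n j ≤ f m j) → (∃ C, ∀ n, nrm (f n) ≤ C) →
    ∃ g, mem g ∧ Tendsto (fun n => nrm (f n - g)) atTop (nhds 0)

namespace SeqBanachLattice

variable (L : SeqBanachLattice)

/-- Membership in the Köthe dual `λ'` of `λ`. -/
def kmem (b : ℕ → ℝ) : Prop := ∀ a, L.mem a → Summable (fun j => |a j * b j|)

/-- The norm of the Köthe dual `λ'`:
`‖b‖_{λ'} = sup_{a ∈ B_λ} |Σ_j a_j b_j|`. -/
noncomputable def knorm (b : ℕ → ℝ) : ℝ :=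
  sSup {r | ∃ a, L.mem a ∧ L.nrm a ≤ 1 ∧ r = |∑' j, a j * b j|}

end SeqBanachLattice

namespace SeqBanachLattice
variable (L : SeqBanachLattice)

lemma nrm_zero : L.nrm 0 = 0 := (L.nrm_eq_zero 0 L.zero_mem).mpr rfl

lemma abs_mem {a : ℕ → ℝ} (ha : L.mem a) : L.mem (fun j => |a j|) ∧ L.nrm (fun j => |a j|) ≤ L.nrm a :=
  L.solid _ a ha (fun j => by simp)

lemma coord_le {a : ℕ → ℝ} (ha : L.mem a) (hs : ∀ j, L.nrm (Pi.single j 1) = 1) (j : ℕ) :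
    |a j| ≤ L.nrm a := by
  set e : ℕ → ℝ := Pi.single j 1 with he
  have h1 : L.mem (a j • e) ∧ L.nrm (a j • e) ≤ L.nrm a := by
    refine L.solid _ a ha (fun m => ?_)
    by_cases hm : m = j
    · subst hm; simp [he]
    · simp [he, Pi.single_apply, hm, abs_nonneg]
  have h2 : L.nrm (a j • e) = |a j| := by
    rw [L.nrm_smul _ _ (L.single_mem j), hs j, mul_one]
  linarith [h1.2]

lemma nrm_sum_le {ι : Type*} (s : Finset ι) (f : ι → ℕ → ℝ) (hf : ∀ i ∈ s, L.mem (f i)) :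
    L.mem (∑ i ∈ s, f i) ∧ L.nrm (∑ i ∈ s, f i) ≤ ∑ i ∈ s, L.nrm (f i) := by
  classical
  induction s using Finset.induction_on with
  | empty => simpa using ⟨L.zero_mem, le_of_eq (L.nrm_zero)⟩
  | @insert i s hx ih =>
    have h1 := ih (fun k hk => hf k (Finset.mem_insert_of_mem hk))
    rw [Finset.sum_insert hx, Finset.sum_insert hx]
    have hm := hf i (Finset.mem_insert_self i s)
    exact ⟨L.add_mem _ _ hm h1.1,
      le_trans (L.nrm_add_le _ _ hm h1.1) (by linarith [h1.2])⟩

def kset (b : ℕ → ℝ) : Set ℝ := {r | ∃ a, L.mem a ∧ L.nrm a ≤ 1 ∧ r = |∑' j, a j * b j|}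

lemma knorm_eq (b : ℕ → ℝ) : L.knorm b = sSup (L.kset b) := rfl

lemma zero_mem_kset (b : ℕ → ℝ) : (0:ℝ) ∈ L.kset b := by
  refine ⟨0, L.zero_mem, le_of_eq_of_le L.nrm_zero zero_le_one, ?_⟩
  simp

lemma sub_mem {a b : ℕ → ℝ} (ha : L.mem a) (hb : L.mem b) : L.mem (a - b) := by
  have := L.add_mem a ((-1:ℝ) • b) ha (L.smul_mem (-1) b hb)
  simpa [sub_eq_add_neg, neg_one_smul] using this

lemma summable_abs_mul {b a : ℕ → ℝ} (hb : L.kmem b) (ha : L.mem a) (hb0 : ∀ j, 0 ≤ b j) :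
    Summable (fun j => |a j| * b j) :=
  (hb a ha).congr (fun j => by rw [abs_mul, abs_of_nonneg (hb0 j)])

lemma abs_tsum_pair_le {b a : ℕ → ℝ} (hb : L.kmem b) (hb0 : ∀ j, 0 ≤ b j) (ha : L.mem a) :
    |∑' j, a j * b j| ≤ ∑' j, |a j| * b j := by
  refine le_trans (norm_tsum_le_tsum_norm ((hb a ha).congr (fun j => (Real.norm_eq_abs _).symm))) ?_
  refine le_of_eq (tsum_congr (fun j => ?_))
  rw [Real.norm_eq_abs, abs_mul, abs_of_nonneg (hb0 j)]

/-- Gliding hump in `λ`: the pairing set is bounded. -/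
lemma pairSet_bddAbove (hs : ∀ j, L.nrm (Pi.single j 1) = 1)
    {b : ℕ → ℝ} (hb : L.kmem b) (hb0 : ∀ j, 0 ≤ b j) :
    BddAbove {r | ∃ a, L.mem a ∧ L.nrm a ≤ 1 ∧ r = ∑' j, |a j| * b j} := by
  by_contra hbdd
  rw [not_bddAbove_iff] at hbdd
  have hpick : ∀ k : ℕ, ∃ a, L.mem a ∧ L.nrm a ≤ 1 ∧ (4:ℝ)^k < ∑' j, |a j| * b j := by
    intro k
    obtain ⟨r, ⟨a, ha, hn, hr⟩, hlt⟩ := hbdd ((4:ℝ)^k)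
    exact ⟨a, ha, hn, hr ▸ hlt⟩
  choose a hamem hanrm halt using hpick
  -- coordinate bounds
  have hcoord : ∀ k j, |a k j| ≤ 1 := fun k j =>
    le_trans (L.coord_le (hamem k) hs j) (hanrm k)
  -- partial sums
  set G : ℕ → ℕ → ℝ := fun k => (2⁻¹:ℝ)^k • (fun j => |a k j|) with hG
  have hGmem : ∀ k, L.mem (G k) := fun k => L.smul_mem _ _ (L.abs_mem (hamem k)).1
  have hGnrm : ∀ k, L.nrm (G k) ≤ (2⁻¹:ℝ)^k := by
    intro k
    rw [hG]
    rw [L.nrm_smul _ _ (L.abs_mem (hamem k)).1]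
    have h1 : |(2⁻¹:ℝ)^k| = (2⁻¹:ℝ)^k := abs_of_nonneg (by positivity)
    rw [h1]
    have := le_trans (L.abs_mem (hamem k)).2 (hanrm k)
    nlinarith [pow_pos (by norm_num : (0:ℝ) < 2⁻¹) k]
  set F : ℕ → ℕ → ℝ := fun n => ∑ k ∈ Finset.range n, G k with hF
  have hFmem : ∀ n, L.mem (F n) := fun n => (L.nrm_sum_le _ G (fun k _ => hGmem k)).1
  have hIco : ∀ m n : ℕ, m ≤ n → L.nrm (F n - F m) ≤ 2 * (2⁻¹:ℝ)^m := by
    intro m n hmn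
    have hsub : F n - F m = ∑ k ∈ Finset.Ico m n, G k := by
      rw [hF]; rw [Finset.sum_Ico_eq_sub _ hmn]
    rw [hsub]
    refine le_trans (L.nrm_sum_le _ G (fun k _ => hGmem k)).2 ?_
    refine le_trans (Finset.sum_le_sum (fun k _ => hGnrm k)) ?_
    calc ∑ k ∈ Finset.Ico m n, (2⁻¹:ℝ)^k ≤ (2⁻¹:ℝ)^m / (1 - 2⁻¹) :=
        geom_sum_Ico_le_of_lt_one (by norm_num) (by norm_num)
      _ = 2 * (2⁻¹)^m := by norm_num; ring
  have hcauchy : ∀ ε : ℝ, 0 < ε → ∃ N, ∀ n m, N ≤ n → N ≤ m → L.nrm (F n - F m) < ε := by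
    intro ε hε
    obtain ⟨N, hN⟩ := exists_pow_lt_of_lt_one (x := ε/2) (y := (2⁻¹:ℝ)) (by linarith) (by norm_num)
    refine ⟨N, fun n m hn hm => ?_⟩
    rcases le_total m n with h | h
    · refine lt_of_le_of_lt (hIco m n h) ?_
      have : ((2:ℝ)⁻¹)^m ≤ (2⁻¹:ℝ)^N := pow_le_pow_of_le_one (by norm_num) (by norm_num) hm
      nlinarith
    · have hneg : L.nrm (F n - F m) = L.nrm (F m - F n) := by
        have h1 : F n - F m = (-1:ℝ) • (F m - F n) := by ring_nf; module
        rw [h1, L.nrm_smul _ _ (L.sub_mem (hFmem m) (hFmem n))]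
        simp
      rw [hneg]
      refine lt_of_le_of_lt (hIco n m h) ?_
      have : ((2:ℝ)⁻¹)^n ≤ (2⁻¹:ℝ)^N := pow_le_pow_of_le_one (by norm_num) (by norm_num) hn
      nlinarith
  obtain ⟨g, hgmem, hgt⟩ := L.complete F hFmem hcauchy
  -- identify g
  have hsumm : ∀ j, Summable (fun k => (2⁻¹:ℝ)^k * |a k j|) := by
    intro j
    refine Summable.of_nonneg_of_le (fun k => by positivity) (fun k => ?_)
      (summable_geometric_of_lt_one (by norm_num) (by norm_num) : Summable fun k => (2⁻¹:ℝ)^k)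
    have := hcoord k j
    nlinarith [pow_pos (by norm_num : (0:ℝ) < 2⁻¹) k]
  have hgj : ∀ j, g j = ∑' k, (2⁻¹:ℝ)^k * |a k j| := by
    intro j
    have h1 : Tendsto (fun n => F n j) atTop (nhds (∑' k, (2⁻¹:ℝ)^k * |a k j|)) := by
      have := (hsumm j).hasSum.tendsto_sum_nat
      refine this.congr (fun n => ?_)
      rw [hF]; simp [hG, Finset.sum_apply]
    have h2 : Tendsto (fun n => F n j - g j) atTop (nhds 0) := by
      refine squeeze_zero_norm (fun n => ?_) hgt
      rw [Real.norm_eq_abs]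
      have : (F n - g) j = F n j - g j := rfl
      rw [← this]
      exact L.coord_le (L.sub_mem (hFmem n) hgmem) hs j
    have h3 : Tendsto (fun n => F n j) atTop (nhds (g j)) := by
      have := h2.add_const (g j)
      simpa using this
    exact tendsto_nhds_unique h3 h1
  have hg0 : ∀ j, 0 ≤ g j := fun j => (hgj j) ▸ tsum_nonneg (fun k => by positivity)
  have hRsum : Summable (fun j => g j * b j) :=
    ((hb g hgmem).congr (fun j => by rw [abs_mul, abs_of_nonneg (hg0 j), abs_of_nonneg (hb0 j)]))
  set R := ∑' j, g j * b j with hR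
  have hRk : ∀ k : ℕ, (2:ℝ)^k < R := by
    intro k
    have h1 : ∀ j, (2⁻¹:ℝ)^k * (|a k j| * b j) ≤ g j * b j := by
      intro j
      have h2 : (2⁻¹:ℝ)^k * |a k j| ≤ g j := by
        rw [hgj j]; exact Summable.le_tsum (hsumm j) k (fun k' _ => by positivity)
      calc (2⁻¹:ℝ)^k * (|a k j| * b j) = ((2⁻¹:ℝ)^k * |a k j|) * b j := by ring
        _ ≤ g j * b j := mul_le_mul_of_nonneg_right h2 (hb0 j)
    have h3 : Summable (fun j => (2⁻¹:ℝ)^k * (|a k j| * b j)) :=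
      (L.summable_abs_mul hb (hamem k) hb0).mul_left _
    have h4 : ∑' j, (2⁻¹:ℝ)^k * (|a k j| * b j) ≤ R := Summable.tsum_le_tsum h1 h3 hRsum
    have h5 : ∑' j, (2⁻¹:ℝ)^k * (|a k j| * b j) = (2⁻¹:ℝ)^k * ∑' j, |a k j| * b j :=
      tsum_mul_left
    have h6 := halt k
    have hp := pow_pos (by norm_num : (0:ℝ) < 2⁻¹) k
    have h7 : (2⁻¹:ℝ)^k * (4:ℝ)^k < (2⁻¹:ℝ)^k * ∑' j, |a k j| * b j :=
      (mul_lt_mul_iff_right₀ hp).mpr h6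
    have h8 : (2⁻¹:ℝ)^k * (4:ℝ)^k = (2:ℝ)^k := by
      rw [← mul_pow]; norm_num
    linarith [h5 ▸ h4]
  obtain ⟨k, hk⟩ := pow_unbounded_of_one_lt R (by norm_num : (1:ℝ) < 2)
  exact absurd (hRk k) (not_lt.mpr hk.le)


lemma kset_bddAbove (hs : ∀ j, L.nrm (Pi.single j 1) = 1)
    {b : ℕ → ℝ} (hb : L.kmem b) (hb0 : ∀ j, 0 ≤ b j) : BddAbove (L.kset b) := by
  obtain ⟨C, hC⟩ := L.pairSet_bddAbove hs hb hb0
  refine ⟨C, fun r hr => ?_⟩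
  obtain ⟨a, ha, hn, hr⟩ := hr
  exact le_trans (hr ▸ L.abs_tsum_pair_le hb hb0 ha) (hC ⟨a, ha, hn, rfl⟩)

lemma knorm_nonneg' {b : ℕ → ℝ} (hbdd : BddAbove (L.kset b)) : 0 ≤ L.knorm b :=
  le_csSup hbdd (L.zero_mem_kset b)

lemma pairing_le (hs : ∀ j, L.nrm (Pi.single j 1) = 1)
    {b : ℕ → ℝ} (hb : L.kmem b) (hb0 : ∀ j, 0 ≤ b j) {a : ℕ → ℝ} (ha : L.mem a) :
    ∑' j, |a j| * b j ≤ L.knorm b * L.nrm a := by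
  have hbdd := L.kset_bddAbove hs hb hb0
  by_cases h0 : L.nrm a = 0
  · have : a = 0 := (L.nrm_eq_zero a ha).mp h0
    subst this
    simp [h0]
  · have hc : 0 < L.nrm a := lt_of_le_of_ne (L.nrm_nonneg a) (Ne.symm h0)
    set c := L.nrm a with hcdef
    set a' : ℕ → ℝ := fun j => |c⁻¹ * a j| with ha'
    have ha'mem : L.mem a' := (L.abs_mem (L.smul_mem c⁻¹ a ha)).1
    have ha'nrm : L.nrm a' ≤ 1 := by
      refine le_trans (L.abs_mem (L.smul_mem c⁻¹ a ha)).2 ?_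
      rw [L.nrm_smul _ _ ha, abs_of_nonneg (by positivity : (0:ℝ) ≤ c⁻¹)]
      rw [inv_mul_cancel₀ h0]
    have hsum' : Summable (fun j => a' j * b j) := by
      refine ((L.summable_abs_mul hb ha hb0).mul_left c⁻¹).congr (fun j => ?_)
      show c⁻¹ * (|a j| * b j) = |c⁻¹ * a j| * b j
      rw [abs_mul, abs_of_nonneg (by positivity : (0:ℝ) ≤ c⁻¹)]
      ring
    have hval : ∑' j, a' j * b j = c⁻¹ * ∑' j, |a j| * b j := by
      rw [← tsum_mul_left]
      refine tsum_congr (fun j => ?_)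
      show |c⁻¹ * a j| * b j = c⁻¹ * (|a j| * b j)
      rw [abs_mul, abs_of_nonneg (by positivity : (0:ℝ) ≤ c⁻¹)]
      ring
    have hnn : 0 ≤ ∑' j, a' j * b j :=
      tsum_nonneg (fun j => mul_nonneg (abs_nonneg _) (hb0 j))
    have hmem : ∑' j, a' j * b j ∈ L.kset b :=
      ⟨a', ha'mem, ha'nrm, (abs_of_nonneg hnn).symm⟩
    have h1 : c⁻¹ * ∑' j, |a j| * b j ≤ L.knorm b := hval ▸ le_csSup hbdd hmem
    calc ∑' j, |a j| * b j = c * (c⁻¹ * ∑' j, |a j| * b j) := by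
          field_simp
      _ ≤ c * L.knorm b := mul_le_mul_of_nonneg_left h1 hc.le
      _ = L.knorm b * c := mul_comm _ _


end SeqBanachLattice

section BanachLatticeValued

variable {E : Type*} [NormedAddCommGroup E] [Lattice E] [IsOrderedAddMonoid E] [HasSolidNorm E]
    [NormedSpace ℝ E] [CompleteSpace E]

/-- The value `|f|(x)` of the modulus of a functional `f ∈ E*` at `x ≥ 0`:
`|f|(x) = sup { f y : |y| ≤ x }`. -/
noncomputable def absApply (f : E →L[ℝ] ℝ) (x : E) : ℝ :=
  sSup {r | ∃ y : E, |y| ≤ x ∧ r = f y}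

/-- A sequence of functionals is positive if each term maps positive vectors to
nonnegative reals. -/
def PosFuncSeq (xs : ℕ → E →L[ℝ] ℝ) : Prop := ∀ j, ∀ y : E, 0 ≤ y → 0 ≤ xs j y

namespace SeqBanachLattice

variable (L : SeqBanachLattice)

/-- Membership in `λ'_ε(E*)`: `(|x_j*|(x))_j ∈ λ'` for every `x ≥ 0`. -/
def epsMem (xs : ℕ → E →L[ℝ] ℝ) : Prop :=
  ∀ x : E, 0 ≤ x → L.kmem (fun j => absApply (xs j) x)

/-- The norm of `λ'_ε(E*)`: `‖(x_j*)‖_ε = sup_{x ∈ B_{E⁺}} ‖(|x_j*|(x))_j‖_{λ'}`. -/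
noncomputable def epsNorm (xs : ℕ → E →L[ℝ] ℝ) : ℝ :=
  sSup {r | ∃ x : E, 0 ≤ x ∧ ‖x‖ ≤ 1 ∧ r = L.knorm (fun j => absApply (xs j) x)}

/-- Membership in `λ_π(E)`: `Σ_j x_j*(|x_j|) < ∞` for every positive `(x_j*) ∈ λ'_ε(E*)`. -/
def piMem (x : ℕ → E) : Prop :=
  ∀ xs : ℕ → E →L[ℝ] ℝ, L.epsMem xs → PosFuncSeq xs → Summable (fun j => xs j |x j|)

/-- The norm of `λ_π(E)`: the supremum of `Σ_j x_j*(|x_j|)` over the positive part of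
the unit ball of `λ'_ε(E*)`. -/
noncomputable def piNorm (x : ℕ → E) : ℝ :=
  sSup {r | ∃ xs : ℕ → E →L[ℝ] ℝ, L.epsMem xs ∧ PosFuncSeq xs ∧ L.epsNorm xs ≤ 1 ∧
    r = ∑' j, xs j |x j|}

/-- Membership in `λ'_w(E*)`: `(x_j*(x))_j ∈ λ'` for every `x ∈ E`. -/
def wMem (xs : ℕ → E →L[ℝ] ℝ) : Prop := ∀ x : E, L.kmem (fun j => xs j x)

/-- The norm of `λ'_w(E*)`: `‖(x_j*)‖_w = sup_{x ∈ B_E} ‖(x_j*(x))_j‖_{λ'}`. -/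
noncomputable def wNorm (xs : ℕ → E →L[ℝ] ℝ) : ℝ :=
  sSup {r | ∃ x : E, ‖x‖ ≤ 1 ∧ r = L.knorm (fun j => xs j x)}

/-- Membership in `λ_s(E)`: `Σ_j |x_j*(x_j)| < ∞` for every `(x_j*) ∈ λ'_w(E*)`. -/
def sMem (x : ℕ → E) : Prop :=
  ∀ xs : ℕ → E →L[ℝ] ℝ, L.wMem xs → Summable (fun j => |xs j (x j)|)

/-- The norm of `λ_s(E)`. -/
noncomputable def sNorm (x : ℕ → E) : ℝ :=
  sSup {r | ∃ xs : ℕ → E →L[ℝ] ℝ, L.wMem xs ∧ L.wNorm xs ≤ 1 ∧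
    r = |∑' j, xs j (x j)|}

end SeqBanachLattice

end BanachLatticeValued

section HelperE

variable {E : Type*} [NormedAddCommGroup E] [Lattice E] [IsOrderedAddMonoid E] [HasSolidNorm E]
  [NormedSpace ℝ E] [PosSMulStrictMono ℝ E] [PosSMulReflectLT ℝ E]
  [CompleteSpace E]

lemma lat_abs_smul (c : ℝ) {v : E} (hv : 0 ≤ v) : |c • v| = |c| • v := by
  rcases le_total 0 c with h | h
  · rw [abs_of_nonneg (smul_nonneg h hv), abs_of_nonneg h]
  · rw [abs_of_nonpos (smul_nonpos_of_nonpos_of_nonneg h hv), abs_of_nonpos h, neg_smul]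

lemma absApply_pos_eq {f : E →L[ℝ] ℝ} (hf : ∀ y : E, 0 ≤ y → 0 ≤ f y) {v : E} (hv : 0 ≤ v) :
    absApply f v = f v := by
  have hub : ∀ r ∈ {r | ∃ y : E, |y| ≤ v ∧ r = f y}, r ≤ f v := by
    rintro r ⟨y, hy, rfl⟩
    have h1 : 0 ≤ f (v - y) := hf _ (sub_nonneg.mpr (le_trans (le_abs_self y) hy))
    rw [map_sub] at h1; linarith
  refine le_antisymm (Real.sSup_le hub (hf v hv)) (le_csSup ⟨f v, hub⟩ ?_)
  exact ⟨v, le_of_eq (abs_of_nonneg hv), rfl⟩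

lemma abs_apply_le_pos {f : E →L[ℝ] ℝ} (hf : ∀ y : E, 0 ≤ y → 0 ≤ f y) (y : E) :
    |f y| ≤ f |y| := by
  rw [abs_le]
  constructor
  · have h1 : 0 ≤ f (|y| + y) := by
      have h2 := neg_le_abs y
      exact hf _ (by rwa [neg_le_iff_add_nonneg] at h2)
    rw [map_add] at h1; linarith
  · have h1 : 0 ≤ f (|y| - y) := hf _ (sub_nonneg.mpr (le_abs_self y))
    rw [map_sub] at h1; linarith

namespace SeqBanachLattice

variable (L : SeqBanachLattice)

def epsSet (xs : ℕ → E →L[ℝ] ℝ) : Set ℝ :=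
  {r | ∃ x : E, 0 ≤ x ∧ ‖x‖ ≤ 1 ∧ r = L.knorm (fun j => absApply (xs j) x)}

lemma epsNorm_eq (xs : ℕ → E →L[ℝ] ℝ) : L.epsNorm xs = sSup (L.epsSet xs) := rfl

def piSet (x : ℕ → E) : Set ℝ :=
  {r | ∃ xs : ℕ → E →L[ℝ] ℝ, L.epsMem xs ∧ PosFuncSeq xs ∧ L.epsNorm xs ≤ 1 ∧
    r = ∑' j, xs j |x j|}

lemma piNorm_eq (x : ℕ → E) : L.piNorm x = sSup (L.piSet x) := rfl

lemma kmem_eval {xs : ℕ → E →L[ℝ] ℝ} (he : L.epsMem xs) (hp : PosFuncSeq xs)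
    {v : E} (hv : 0 ≤ v) : L.kmem (fun j => xs j v) := by
  have h1 : (fun j => absApply (xs j) v) = fun j => xs j v :=
    funext fun j => absApply_pos_eq (hp j) hv
  exact h1 ▸ he v hv

lemma knorm_zero_fun : L.knorm (fun _ => (0:ℝ)) = 0 := by
  have h1 : L.kset (fun _ => (0:ℝ)) = {0} := by
    ext r
    constructor
    · rintro ⟨a, _, _, rfl⟩; simp
    · intro hr
      rw [Set.mem_singleton_iff] at hr
      subst hr; exact L.zero_mem_kset _
  rw [knorm_eq, h1, csSup_singleton]

lemma zero_mem_piSet (x : ℕ → E) : (0:ℝ) ∈ L.piSet x := by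
  refine ⟨fun _ => 0, ?_, ?_, ?_, ?_⟩
  · intro v hv
    have h1 : (fun j : ℕ => absApply ((0 : E →L[ℝ] ℝ)) v) = fun _ : ℕ => (0:ℝ) := by
      funext j
      rw [absApply_pos_eq (fun y _ => le_of_eq (ContinuousLinearMap.zero_apply y).symm) hv]
      exact ContinuousLinearMap.zero_apply v
    rw [h1]
    intro a _
    exact summable_zero.congr (fun j => by simp)
  · intro j y _
    simp
  · rw [epsNorm_eq]
    refine Real.sSup_le ?_ zero_le_one
    rintro r ⟨v, hv, _, rfl⟩
    have h1 : (fun j : ℕ => absApply ((0 : E →L[ℝ] ℝ)) v) = fun _ : ℕ => (0:ℝ) := by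
      funext j
      rw [absApply_pos_eq (fun y _ => le_of_eq (ContinuousLinearMap.zero_apply y).symm) hv]
      exact ContinuousLinearMap.zero_apply v
    rw [h1, L.knorm_zero_fun]
    exact zero_le_one
  · simp

/-- Gliding hump in `E`: the `ε`-norm set of a positive `ε`-member is bounded. -/
lemma epsSet_bddAbove (hs : ∀ j, L.nrm (Pi.single j 1) = 1) {xs : ℕ → E →L[ℝ] ℝ}
    (he : L.epsMem xs) (hp : PosFuncSeq xs) : BddAbove (L.epsSet xs) := by
  by_contra hbdd
  rw [not_bddAbove_iff] at hbdd
  have hpick : ∀ k : ℕ, ∃ v : E, 0 ≤ v ∧ ‖v‖ ≤ 1 ∧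
      (4:ℝ)^k < L.knorm (fun j => absApply (xs j) v) := by
    intro k
    obtain ⟨r, ⟨v, h1, h2, rfl⟩, hlt⟩ := hbdd ((4:ℝ)^k)
    exact ⟨v, h1, h2, hlt⟩
  choose v hv0 hv1 hvlt using hpick
  have hgeo : Summable (fun k => (2⁻¹:ℝ)^k) :=
    summable_geometric_of_lt_one (by norm_num) (by norm_num)
  have hsumv : Summable (fun k => (2⁻¹:ℝ)^k • v k) := by
    refine Summable.of_norm_bounded hgeo (fun k => ?_)
    rw [norm_smul, Real.norm_eq_abs, abs_of_nonneg (by positivity : (0:ℝ) ≤ (2⁻¹:ℝ)^k)]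
    nlinarith [hv1 k, pow_pos (show (0:ℝ) < 2⁻¹ by norm_num) k, norm_nonneg (v k)]
  set vst := ∑' k, (2⁻¹:ℝ)^k • v k with hvst
  have hvst0 : 0 ≤ vst := tsum_nonneg (fun k => smul_nonneg (by positivity) (hv0 k))
  have hbmem : L.kmem (fun j => xs j vst) := L.kmem_eval he hp hvst0
  have hb0 : ∀ j, 0 ≤ xs j vst := fun j => hp j _ hvst0
  have hKbdd := L.kset_bddAbove hs hbmem hb0
  set K := L.knorm (fun j => xs j vst) with hK
  have hK0 : 0 ≤ K := L.knorm_nonneg' hKbdd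
  have hdom : ∀ k j, xs j (v k) ≤ (2:ℝ)^k * xs j vst := by
    intro k j
    have h2 : Summable (fun m => xs j ((2⁻¹:ℝ)^m • v m)) :=
      hsumv.map (xs j : E →L[ℝ] ℝ) (xs j).continuous
    have h2' : Summable (fun m => (2⁻¹:ℝ)^m * xs j (v m)) :=
      h2.congr (fun m => by rw [map_smul]; simp)
    have h1 : xs j vst = ∑' m, (2⁻¹:ℝ)^m * xs j (v m) := by
      rw [hvst, (xs j).map_tsum hsumv]
      exact tsum_congr (fun m => by rw [map_smul]; simp)
    have h3 : (2⁻¹:ℝ)^k * xs j (v k) ≤ xs j vst := by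
      rw [h1]
      exact Summable.le_tsum h2' k (fun m _ => mul_nonneg (by positivity) (hp j _ (hv0 m)))
    have h4 : (2⁻¹:ℝ)^k * (2:ℝ)^k = 1 := by rw [← mul_pow]; norm_num
    have h5 := mul_le_mul_of_nonneg_left h3 (pow_nonneg (show (0:ℝ) ≤ 2 by norm_num) k)
    have h6 : (2:ℝ)^k * ((2⁻¹:ℝ)^k * xs j (v k)) = xs j (v k) := by
      rw [← mul_assoc, mul_comm ((2:ℝ)^k), h4, one_mul]
    linarith
  have hbk : ∀ k, L.knorm (fun j => absApply (xs j) (v k)) ≤ (2:ℝ)^k * K := by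
    intro k
    have hbkm : L.kmem (fun j => xs j (v k)) := L.kmem_eval he hp (hv0 k)
    have hbk0 : ∀ j, 0 ≤ xs j (v k) := fun j => hp j _ (hv0 k)
    have heq : (fun j => absApply (xs j) (v k)) = fun j => xs j (v k) :=
      funext fun j => absApply_pos_eq (hp j) (hv0 k)
    rw [heq, knorm_eq]
    refine Real.sSup_le ?_ (by positivity)
    rintro r ⟨a, ha, han, rfl⟩
    have h1 : |∑' j, a j * xs j (v k)| ≤ ∑' j, |a j| * xs j (v k) :=
      L.abs_tsum_pair_le hbkm hbk0 ha
    have h2 : ∑' j, |a j| * xs j (v k) ≤ ∑' j, |a j| * ((2:ℝ)^k * xs j vst) :=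
      Summable.tsum_le_tsum (fun j => mul_le_mul_of_nonneg_left (hdom k j) (abs_nonneg _))
        (L.summable_abs_mul hbkm ha hbk0)
        (((L.summable_abs_mul hbmem ha hb0).mul_left ((2:ℝ)^k)).congr (fun j => by ring))
    have h3 : ∑' j, |a j| * ((2:ℝ)^k * xs j vst) = (2:ℝ)^k * ∑' j, |a j| * xs j vst := by
      rw [← tsum_mul_left]
      exact tsum_congr (fun j => by ring)
    have h4 : ∑' j, |a j| * xs j vst ≤ K * L.nrm a := L.pairing_le hs hbmem hb0 ha
    have h5 : K * L.nrm a ≤ K := by nlinarith [L.nrm_nonneg a]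
    have h6 : (0:ℝ) ≤ (2:ℝ)^k := by positivity
    calc |∑' j, a j * xs j (v k)| ≤ ∑' j, |a j| * ((2:ℝ)^k * xs j vst) := le_trans h1 h2
      _ = (2:ℝ)^k * ∑' j, |a j| * xs j vst := h3
      _ ≤ (2:ℝ)^k * K := by nlinarith
  obtain ⟨k, hk⟩ := pow_unbounded_of_one_lt K (by norm_num : (1:ℝ) < 2)
  have h1 := hvlt k
  have h2 := hbk k
  have h3 : (2:ℝ)^k * K < (2:ℝ)^k * (2:ℝ)^k := by
    have := pow_pos (show (0:ℝ) < 2 by norm_num) k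
    nlinarith
  have h4 : (2:ℝ)^k * (2:ℝ)^k = (4:ℝ)^k := by rw [← mul_pow]; norm_num
  linarith

lemma opnorm_pair (hs : ∀ j, L.nrm (Pi.single j 1) = 1) {xs : ℕ → E →L[ℝ] ℝ}
    (he : L.epsMem xs) (hp : PosFuncSeq xs) {M : ℝ} (hM0 : 0 ≤ M)
    (hk : ∀ v : E, 0 ≤ v → ‖v‖ ≤ 1 → L.knorm (fun j => absApply (xs j) v) ≤ M) :
    (∀ j, ‖xs j‖ ≤ M) ∧
      (∀ v : E, 0 ≤ v → ‖v‖ ≤ 1 → ∀ a, L.mem a → ∑' j, |a j| * xs j v ≤ M * L.nrm a) := by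
  have hcoord : ∀ v : E, 0 ≤ v → ‖v‖ ≤ 1 → ∀ j, xs j v ≤ M := by
    intro v hv hv1 j
    have hbm := L.kmem_eval he hp hv
    have hb0 : ∀ m, 0 ≤ xs m v := fun m => hp m v hv
    have hts : ∑' m, (Pi.single j 1 : ℕ → ℝ) m * xs m v = xs j v := by
      rw [tsum_eq_single j (fun m hm => by rw [Pi.single_eq_of_ne hm, zero_mul])]
      rw [Pi.single_eq_same, one_mul]
    have h1 : xs j v ≤ L.knorm (fun m => xs m v) := by
      refine le_csSup (L.kset_bddAbove hs hbm hb0)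
        ⟨Pi.single j 1, L.single_mem j, le_of_eq (hs j), ?_⟩
      rw [hts, abs_of_nonneg (hb0 j)]
    have heq : (fun m => absApply (xs m) v) = fun m => xs m v :=
      funext fun m => absApply_pos_eq (hp m) hv
    refine le_trans h1 ?_
    rw [← heq]
    exact hk v hv hv1
  constructor
  · intro j
    refine (xs j).opNorm_le_bound hM0 (fun y => ?_)
    by_cases hy : y = 0
    · simp [hy]
    · have hny : (0:ℝ) < ‖y‖ := norm_pos_iff.mpr hy
      set u := ‖y‖⁻¹ • |y| with hu
      have hu0 : 0 ≤ u := smul_nonneg (by positivity) (abs_nonneg y)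
      have hu1 : ‖u‖ ≤ 1 := by
        rw [hu, norm_smul, Real.norm_eq_abs, abs_of_nonneg (by positivity : (0:ℝ) ≤ ‖y‖⁻¹),
          norm_abs_eq_norm, inv_mul_cancel₀ hny.ne']
      have h2 : |xs j y| ≤ xs j |y| := abs_apply_le_pos (hp j) y
      have h3 : |y| = ‖y‖ • u := by rw [hu, smul_inv_smul₀ hny.ne']
      have h4 : xs j |y| = ‖y‖ * xs j u := by rw [h3, map_smul]; simp
      rw [Real.norm_eq_abs]
      calc |xs j y| ≤ ‖y‖ * xs j u := by rw [← h4]; exact h2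
        _ ≤ ‖y‖ * M := mul_le_mul_of_nonneg_left (hcoord u hu0 hu1 j) hny.le
        _ = M * ‖y‖ := mul_comm _ _
  · intro v hv hv1 a ha
    have hbm := L.kmem_eval he hp hv
    have hb0 : ∀ m, 0 ≤ xs m v := fun m => hp m v hv
    have h1 := L.pairing_le hs hbm hb0 ha
    have heq : (fun m => absApply (xs m) v) = fun m => xs m v :=
      funext fun m => absApply_pos_eq (hp m) hv
    have h2 : L.knorm (fun m => xs m v) ≤ M := by
      rw [← heq]
      exact hk v hv hv1
    nlinarith [L.nrm_nonneg a]

/-- Master gliding hump: uniformly controlled families pair boundedly with `x ∈ λ_π(E)`. -/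
lemma gliding (hs : ∀ j, L.nrm (Pi.single j 1) = 1) {x : ℕ → E} (hx : L.piMem x)
    (hx0 : ∀ j, 0 ≤ x j) (ws : ℕ → ℕ → E →L[ℝ] ℝ)
    (hpos : ∀ k, PosFuncSeq (ws k)) (heps : ∀ k, L.epsMem (ws k)) {M : ℝ} (hM : 1 ≤ M)
    (hnorm : ∀ k j, ‖ws k j‖ ≤ M)
    (hpair : ∀ k (v : E), 0 ≤ v → ‖v‖ ≤ 1 → ∀ a, L.mem a →
      ∑' j, |a j| * ws k j v ≤ M * L.nrm a) :
    ∃ C, ∀ k, ∑' j, ws k j (x j) ≤ C := by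
  by_contra hbdd
  push_neg at hbdd
  have hpick : ∀ m : ℕ, ∃ k, M * 4^m < ∑' j, ws k j (x j) := fun m => hbdd (M * 4^m)
  choose φ hφ using hpick
  have hMpos : (0:ℝ) < M := lt_of_lt_of_le one_pos hM
  have hgeo : Summable (fun m => (2⁻¹:ℝ)^m) :=
    summable_geometric_of_lt_one (by norm_num) (by norm_num)
  have hsop : ∀ j, Summable (fun m => ((2⁻¹:ℝ)^m * M⁻¹) • ws (φ m) j) := by
    intro j
    refine Summable.of_norm_bounded hgeo (fun m => ?_)
    have hns : ‖((2⁻¹:ℝ)^m * M⁻¹) • ws (φ m) j‖ = |(2⁻¹:ℝ)^m * M⁻¹| * ‖ws (φ m) j‖ := by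
      rw [← Real.norm_eq_abs]
      exact norm_smul ((2⁻¹:ℝ)^m * M⁻¹) (ws (φ m) j)
    rw [hns, abs_of_nonneg (by positivity : (0:ℝ) ≤ (2⁻¹:ℝ)^m * M⁻¹)]
    have h1 : M⁻¹ * ‖ws (φ m) j‖ ≤ 1 := by
      rw [← inv_mul_cancel₀ hMpos.ne']
      exact mul_le_mul_of_nonneg_left (hnorm _ _) (by positivity)
    calc (2⁻¹:ℝ)^m * M⁻¹ * ‖ws (φ m) j‖ = (2⁻¹:ℝ)^m * (M⁻¹ * ‖ws (φ m) j‖) := by ring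
      _ ≤ (2⁻¹:ℝ)^m * 1 := mul_le_mul_of_nonneg_left h1 (by positivity)
      _ = (2⁻¹:ℝ)^m := mul_one _
  set zs : ℕ → E →L[ℝ] ℝ := fun j => ∑' m, ((2⁻¹:ℝ)^m * M⁻¹) • ws (φ m) j with hzs
  have hev : ∀ j (v : E), zs j v = ∑' m, (2⁻¹:ℝ)^m * M⁻¹ * ws (φ m) j v := by
    intro j v
    have h1 := (ContinuousLinearMap.apply ℝ ℝ v).map_tsum (hsop j)
    refine Eq.trans ?_ (h1.trans (tsum_congr (fun m => ?_)))
    · rfl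
    · simp
  have hevs : ∀ j (v : E), Summable (fun m => (2⁻¹:ℝ)^m * M⁻¹ * ws (φ m) j v) := by
    intro j v
    have h1 := (hsop j).map (ContinuousLinearMap.apply ℝ ℝ v)
      (ContinuousLinearMap.apply ℝ ℝ v).continuous
    exact h1.congr (fun m => by simp)
  have hzpos : PosFuncSeq zs := by
    intro j v hv
    rw [hev]
    exact tsum_nonneg (fun m => mul_nonneg (by positivity) (hpos (φ m) j v hv))
  have hzeps : L.epsMem zs := by
    intro v hv
    have heqz : (fun j => absApply (zs j) v) = fun j => zs j v :=
      funext fun j => absApply_pos_eq (hzpos j) hv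
    rw [heqz]
    intro a ha
    by_cases hv0 : v = 0
    · subst hv0
      exact summable_zero.congr (fun j => by simp)
    · have hnv : (0:ℝ) < ‖v‖ := norm_pos_iff.mpr hv0
      set u := ‖v‖⁻¹ • v with hu
      have hu0 : 0 ≤ u := smul_nonneg (by positivity) hv
      have hu1 : ‖u‖ ≤ 1 := by
        rw [hu, norm_smul, Real.norm_eq_abs, abs_of_nonneg (by positivity : (0:ℝ) ≤ ‖v‖⁻¹),
          inv_mul_cancel₀ hnv.ne']
      have hveq : v = ‖v‖ • u := by rw [hu, smul_inv_smul₀ hnv.ne']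
      -- main summability at u
      have hmain : Summable (fun j => |a j| * zs j u) := by
        set f : ℕ × ℕ → ℝ := fun p => |a p.2| * ((2⁻¹:ℝ)^p.1 * M⁻¹ * ws (φ p.1) p.2 u) with hf
        have hf0 : ∀ p, 0 ≤ f p := fun p =>
          mul_nonneg (abs_nonneg _) (mul_nonneg (by positivity) (hpos _ _ _ hu0))
        have hfib : ∀ m, Summable fun j => f (m, j) := by
          intro m
          have h1 := L.summable_abs_mul (L.kmem_eval (heps (φ m)) (hpos (φ m)) hu0) ha
            (fun j => hpos (φ m) j u hu0)
          exact (h1.mul_left ((2⁻¹:ℝ)^m * M⁻¹)).congr (fun j => by rw [hf]; ring)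
        have hrowval : ∀ m, ∑' j, f (m, j) =
            ((2⁻¹:ℝ)^m * M⁻¹) * ∑' j, |a j| * ws (φ m) j u := by
          intro m
          rw [← tsum_mul_left]
          exact tsum_congr (fun j => by rw [hf]; ring)
        have hrow : Summable fun m => ∑' j, f (m, j) := by
          refine Summable.of_nonneg_of_le (fun m => tsum_nonneg (fun j => hf0 (m, j)))
            (fun m => ?_) (hgeo.mul_right (L.nrm a))
          rw [hrowval m]
          have h1 := hpair (φ m) u hu0 hu1 a ha
          have h2 : M⁻¹ * (M * L.nrm a) = L.nrm a := by field_simp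
          have h3 : (0:ℝ) ≤ (2⁻¹:ℝ)^m := by positivity
          have h4 : ((2⁻¹:ℝ)^m * M⁻¹) * ∑' j, |a j| * ws (φ m) j u ≤
              ((2⁻¹:ℝ)^m * M⁻¹) * (M * L.nrm a) :=
            mul_le_mul_of_nonneg_left h1 (by positivity)
          calc ((2⁻¹:ℝ)^m * M⁻¹) * ∑' j, |a j| * ws (φ m) j u
              ≤ ((2⁻¹:ℝ)^m * M⁻¹) * (M * L.nrm a) := h4
            _ = (2⁻¹:ℝ)^m * (M⁻¹ * (M * L.nrm a)) := by ring
            _ = (2⁻¹:ℝ)^m * L.nrm a := by rw [h2]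
        have hprod : Summable f := (summable_prod_of_nonneg hf0).mpr ⟨hfib, hrow⟩
        have hswap : Summable (f ∘ (Equiv.prodComm ℕ ℕ)) :=
          ((Equiv.prodComm ℕ ℕ).summable_iff).mpr hprod
        have hswap0 : ∀ p : ℕ × ℕ, 0 ≤ (f ∘ (Equiv.prodComm ℕ ℕ)) p := fun p => hf0 _
        have h5 := ((summable_prod_of_nonneg hswap0).mp hswap).2
        refine h5.congr (fun j => ?_)
        have h6 : ∑' m, (f ∘ (Equiv.prodComm ℕ ℕ)) (j, m) = ∑' m, f (m, j) := rfl
        rw [h6]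
        have h7 : ∀ m, f (m, j) = |a j| * ((2⁻¹:ℝ)^m * M⁻¹ * ws (φ m) j u) := fun m => rfl
        rw [tsum_congr h7, tsum_mul_left, ← hev j u]
      have hzv : ∀ j, zs j v = ‖v‖ * zs j u := by
        intro j
        conv_lhs => rw [hveq]
        rw [map_smul]; simp
      refine ((hmain.mul_left ‖v‖).congr (fun j => ?_))
      show ‖v‖ * (|a j| * zs j u) = |a j * zs j v|
      rw [hzv j, abs_mul, abs_mul, abs_of_nonneg (norm_nonneg v),
        abs_of_nonneg (hzpos j u hu0)]
      ring
  have hzsum : Summable fun j => zs j (x j) :=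
    (hx zs hzeps hzpos).congr (fun j => by rw [abs_of_nonneg (hx0 j)])
  set W := ∑' j, zs j (x j) with hW
  have hWm : ∀ m : ℕ, (2:ℝ)^m < W := by
    intro m
    have hterm : ∀ j, (2⁻¹:ℝ)^m * M⁻¹ * ws (φ m) j (x j) ≤ zs j (x j) := by
      intro j
      rw [hev]
      exact Summable.le_tsum (hevs j (x j)) m
        (fun m' _ => mul_nonneg (by positivity) (hpos (φ m') j _ (hx0 j)))
    have hsm : Summable (fun j => (2⁻¹:ℝ)^m * M⁻¹ * ws (φ m) j (x j)) := by
      have h1 := hx (ws (φ m)) (heps _) (hpos _)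
      exact ((h1.congr (fun j => by rw [abs_of_nonneg (hx0 j)])).mul_left _)
    have h2 : ∑' j, (2⁻¹:ℝ)^m * M⁻¹ * ws (φ m) j (x j) ≤ W := Summable.tsum_le_tsum hterm hsm hzsum
    have h3 : ∑' j, (2⁻¹:ℝ)^m * M⁻¹ * ws (φ m) j (x j) =
        (2⁻¹:ℝ)^m * M⁻¹ * ∑' j, ws (φ m) j (x j) := tsum_mul_left
    have h4 := hφ m
    have h5 : (2⁻¹:ℝ)^m * M⁻¹ * (M * 4^m) < (2⁻¹:ℝ)^m * M⁻¹ * ∑' j, ws (φ m) j (x j) := by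
      have : (0:ℝ) < (2⁻¹:ℝ)^m * M⁻¹ := by positivity
      exact (mul_lt_mul_iff_right₀ this).mpr h4
    have h6 : (2⁻¹:ℝ)^m * M⁻¹ * (M * 4^m) = (2:ℝ)^m := by
      have h7 : (2⁻¹:ℝ)^m * (4:ℝ)^m = (2:ℝ)^m := by rw [← mul_pow]; norm_num
      have h8 : M⁻¹ * M = 1 := inv_mul_cancel₀ hMpos.ne'
      calc (2⁻¹:ℝ)^m * M⁻¹ * (M * 4^m) = ((2⁻¹:ℝ)^m * (4:ℝ)^m) * (M⁻¹ * M) := by ring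
        _ = (2:ℝ)^m := by rw [h7, h8, mul_one]
    linarith
  obtain ⟨m, hm⟩ := pow_unbounded_of_one_lt W (by norm_num : (1:ℝ) < 2)
  exact absurd (hWm m) (not_lt.mpr hm.le)

lemma piSet_bddAbove (hs : ∀ j, L.nrm (Pi.single j 1) = 1) {x : ℕ → E} (hx : L.piMem x)
    (hx0 : ∀ j, 0 ≤ x j) : BddAbove (L.piSet x) := by
  by_contra hbdd
  rw [not_bddAbove_iff] at hbdd
  have hpick : ∀ k : ℕ, ∃ xs : ℕ → E →L[ℝ] ℝ, L.epsMem xs ∧ PosFuncSeq xs ∧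
      L.epsNorm xs ≤ 1 ∧ (k:ℝ) < ∑' j, xs j |x j| := by
    intro k
    obtain ⟨r, ⟨xs, h1, h2, h3, rfl⟩, hlt⟩ := hbdd (k:ℝ)
    exact ⟨xs, h1, h2, h3, hlt⟩
  choose xs hxe hxp hxn hgt using hpick
  have hk1 : ∀ k, ∀ v : E, 0 ≤ v → ‖v‖ ≤ 1 →
      L.knorm (fun j => absApply (xs k j) v) ≤ 1 := by
    intro k v hv hv1
    refine le_trans (le_csSup (L.epsSet_bddAbove hs (hxe k) (hxp k)) ⟨v, hv, hv1, rfl⟩) ?_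
    exact hxn k
  have hop : ∀ k, (∀ j, ‖xs k j‖ ≤ 1) ∧ (∀ v : E, 0 ≤ v → ‖v‖ ≤ 1 → ∀ a, L.mem a →
      ∑' j, |a j| * xs k j v ≤ 1 * L.nrm a) :=
    fun k => L.opnorm_pair hs (hxe k) (hxp k) zero_le_one (hk1 k)
  obtain ⟨C, hC⟩ := L.gliding hs hx hx0 xs hxp hxe le_rfl (fun k => (hop k).1)
    (fun k => (hop k).2)
  obtain ⟨k, hk⟩ := exists_nat_gt C
  have h1 := hgt k
  have h2 : ∑' j, xs k j |x j| = ∑' j, xs k j (x j) :=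
    tsum_congr (fun j => by rw [abs_of_nonneg (hx0 j)])
  have h3 := hC k
  rw [h2] at h1
  linarith


end SeqBanachLattice

end HelperE

open Classical in
/-- The closing-up `x^0` of a sequence `x`: its `j`-th coordinate is the `j`-th nonzero
coordinate of `x` if it exists, and `0` otherwise. -/
noncomputable def closeUp {α : Type*} [Zero α] (x : ℕ → α) : ℕ → α := fun j =>
  if {i | x i ≠ 0}.Infinite ∨ j < Nat.card {i | x i ≠ 0} then
    x (Nat.nth (fun i => x i ≠ 0) j) else 0

/-- An invariant sequence lattice: a KB-space of sequences with normalized unit vectors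
whose Köthe dual is invariant under closing-up (with the same norm) and under passing to
subsequences (with smaller norm). -/
structure InvariantSeqLattice extends SeqKBLattice where
  nrm_single : ∀ j, nrm (Pi.single j 1) = 1
  dual_closeUp_mem : ∀ b : ℕ → ℝ, toSeqBanachLattice.kmem b ↔
    toSeqBanachLattice.kmem (closeUp b)
  dual_closeUp_nrm : ∀ b : ℕ → ℝ, toSeqBanachLattice.kmem b →
    toSeqBanachLattice.knorm b = toSeqBanachLattice.knorm (closeUp b)
  dual_subseq : ∀ (b : ℕ → ℝ) (k : ℕ → ℕ), toSeqBanachLattice.kmem b → StrictMono k →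
    toSeqBanachLattice.kmem (b ∘ k) ∧
      toSeqBanachLattice.knorm (b ∘ k) ≤ toSeqBanachLattice.knorm b

/-- Let `E` be a Banach lattice, `x = (x_j) ∈ λ_π(E)⁺` with `x_j ≠ 0` for all `j`, and
`ℕ = ⋃_i ℕ_i` a partition into pairwise disjoint infinite sets, `ℕ_i` enumerated by the
strictly monotone map `N i`. Let `y_i` be the sequence with `x_j` in coordinate `N i j`
and `0` elsewhere. Then `T : ℓ_1 → λ_π(E)`, `T((a_i)) = Σ_i a_i y_i`, is a well-defined
injective bounded linear operator and a Riesz homomorphism (so the closure of its range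
is a closed infinite-dimensional sublattice of `λ_π(E)`). -/
theorem mother_vector_operator
    {E : Type*} [NormedAddCommGroup E] [Lattice E] [IsOrderedAddMonoid E] [HasSolidNorm E]
      [NormedSpace ℝ E] [PosSMulStrictMono ℝ E] [PosSMulReflectLT ℝ E]
    [CompleteSpace E]
    (L : InvariantSeqLattice)
    (x : ℕ → E) (hxmem : L.toSeqBanachLattice.piMem x) (hxpos : ∀ j, 0 ≤ x j)
    (hxne : ∀ j, x j ≠ 0)
    (N : ℕ → ℕ → ℕ) (hmono : ∀ i, StrictMono (N i))
    (hdisj : ∀ i i', i ≠ i' → Disjoint (Set.range (N i)) (Set.range (N i')))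
    (hcover : (⋃ i, Set.range (N i)) = Set.univ)
    (y : ℕ → ℕ → E) (hy : ∀ i j, y i (N i j) = x j)
    (hy0 : ∀ i m, m ∉ Set.range (N i) → y i m = 0) :
    ∀ T : (ℕ → ℝ) → (ℕ → E),
      (∀ a : ℕ → ℝ, Summable (fun i => |a i|) → T a = fun m => ∑' i, a i • y i m) →
      (∀ a : ℕ → ℝ, Summable (fun i => |a i|) →
        L.toSeqBanachLattice.piMem (T a) ∧
        L.toSeqBanachLattice.piNorm (T a) ≤
          L.toSeqBanachLattice.piNorm x * ∑' i, |a i|) ∧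
      (∀ a b : ℕ → ℝ, Summable (fun i => |a i|) → Summable (fun i => |b i|) →
        T (a + b) = T a + T b) ∧
      (∀ (r : ℝ) (a : ℕ → ℝ), Summable (fun i => |a i|) → T (r • a) = r • T a) ∧
      (∀ a b : ℕ → ℝ, Summable (fun i => |a i|) → Summable (fun i => |b i|) →
        T a = T b → a = b) ∧
      (∀ a b : ℕ → ℝ, Summable (fun i => |a i|) → Summable (fun i => |b i|) →
        T (a ⊓ b) = T a ⊓ T b) := by
  intro T hT
  classical
  set B := L.toSeqBanachLattice with hB
  have hs : ∀ j, B.nrm (Pi.single j 1) = 1 := L.nrm_single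
  -- the reindexing bijection
  have hinj : Function.Injective (fun p : Σ _ : ℕ, ℕ => N p.1 p.2) := by
    rintro ⟨i, j⟩ ⟨i', j'⟩ h
    simp only at h
    by_cases hii : i = i'
    · subst hii
      exact congrArg (Sigma.mk i) ((hmono i).injective h)
    · exact absurd (h ▸ ⟨j', rfl⟩ : N i j ∈ Set.range (N i'))
        (Set.disjoint_left.mp (hdisj i i' hii) ⟨j, rfl⟩)
  have hsurj : Function.Surjective (fun p : Σ _ : ℕ, ℕ => N p.1 p.2) := by
    intro m
    have h1 : m ∈ ⋃ i, Set.range (N i) := by rw [hcover]; trivial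
    rw [Set.mem_iUnion] at h1
    obtain ⟨i, hi⟩ := h1
    obtain ⟨j, rfl⟩ := hi
    exact ⟨⟨i, j⟩, rfl⟩
  set e : (Σ _ : ℕ, ℕ) ≃ ℕ := Equiv.ofBijective _ ⟨hinj, hsurj⟩ with he
  set idx : ℕ → ℕ := fun m => (e.symm m).1 with hidxdef
  set pos : ℕ → ℕ := fun m => (e.symm m).2 with hposdef
  have hNidx : ∀ m, N (idx m) (pos m) = m := fun m => e.apply_symm_apply m
  have hsymmN : ∀ i j, e.symm (N i j) = ⟨i, j⟩ := fun i j => e.symm_apply_apply ⟨i, j⟩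
  have hidxN : ∀ i j, idx (N i j) = i := by
    intro i j
    show (e.symm (N i j)).1 = i
    rw [hsymmN]
  have hposN : ∀ i j, pos (N i j) = j := by
    intro i j
    show (e.symm (N i j)).2 = j
    rw [hsymmN]
  have hymem0 : ∀ i m, i ≠ idx m → y i m = 0 := by
    intro i m hne
    exact hy0 i m (fun hmem =>
      Set.disjoint_left.mp (hdisj i (idx m) hne) hmem ⟨pos m, hNidx m⟩)
  have hTval : ∀ (a : ℕ → ℝ), Summable (fun i => |a i|) → ∀ m,
      T a m = a (idx m) • x (pos m) := by
    intro a ha m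
    have h1 : T a m = ∑' i, a i • y i m := by rw [hT a ha]
    rw [h1, tsum_eq_single (idx m) (fun i hi => by rw [hymem0 i m hi, smul_zero])]
    have h2 := hy (idx m) (pos m)
    rw [hNidx m] at h2
    rw [h2]
  have habs : ∀ (a : ℕ → ℝ), Summable (fun i => |a i|) → ∀ m,
      |T a m| = |a (idx m)| • x (pos m) := by
    intro a ha m
    rw [hTval a ha m, lat_abs_smul _ (hxpos _)]
  -- the key summability and value computation
  have key : ∀ (a : ℕ → ℝ), Summable (fun i => |a i|) →
      ∀ xs : ℕ → (E →L[ℝ] ℝ), B.epsMem xs → PosFuncSeq xs →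
      (Summable (fun m => xs m |T a m|) ∧
       Summable (fun i => |a i| * ∑' j, xs (N i j) (x j)) ∧
       ∑' m, xs m |T a m| = ∑' i, |a i| * ∑' j, xs (N i j) (x j)) := by
    intro a ha xs hxe hxp
    set ws : ℕ → ℕ → E →L[ℝ] ℝ := fun i j => xs (N i j) with hws
    have hwspos : ∀ i, PosFuncSeq (ws i) := fun i j => hxp (N i j)
    have hwseps : ∀ i, B.epsMem (ws i) := by
      intro i v hv
      exact (L.dual_subseq (fun j => absApply (xs j) v) (N i) (hxe v hv) (hmono i)).1
    obtain ⟨M0, hM0⟩ := B.epsSet_bddAbove hs hxe hxp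
    set M := max M0 1 with hM
    have hM1 : (1:ℝ) ≤ M := le_max_right _ _
    have hk : ∀ v : E, 0 ≤ v → ‖v‖ ≤ 1 → B.knorm (fun j => absApply (xs j) v) ≤ M :=
      fun v hv hv1 => le_trans (hM0 ⟨v, hv, hv1, rfl⟩) (le_max_left _ _)
    obtain ⟨hn, _⟩ := B.opnorm_pair hs hxe hxp (le_trans zero_le_one hM1) hk
    have hnorm : ∀ i j, ‖ws i j‖ ≤ M := fun i j => hn (N i j)
    have hpair : ∀ i (v : E), 0 ≤ v → ‖v‖ ≤ 1 → ∀ a', B.mem a' →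
        ∑' j, |a' j| * ws i j v ≤ M * B.nrm a' := by
      intro i v hv hv1 a' ha'
      have heqb : (fun j => absApply (xs j) v) = fun j => xs j v :=
        funext fun j => absApply_pos_eq (hxp j) hv
      have hsub := L.dual_subseq (fun j => absApply (xs j) v) (N i) (hxe v hv) (hmono i)
      rw [heqb] at hsub
      have hkc : B.kmem (fun j => xs (N i j) v) := hsub.1
      have hknc : B.knorm (fun j => xs (N i j) v) ≤ B.knorm (fun j => xs j v) := hsub.2
      have hb0 : ∀ j, 0 ≤ xs (N i j) v := fun j => hxp (N i j) v hv
      have h1 := B.pairing_le hs hkc hb0 ha'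
      have h2 : B.knorm (fun j => xs j v) ≤ M := by rw [← heqb]; exact hk v hv hv1
      calc ∑' j, |a' j| * ws i j v ≤ B.knorm (fun j => xs (N i j) v) * B.nrm a' := h1
        _ ≤ M * B.nrm a' := mul_le_mul_of_nonneg_right (le_trans hknc h2) (B.nrm_nonneg a')
    obtain ⟨C, hC⟩ := B.gliding hs hxmem hxpos ws hwspos hwseps hM1 hnorm hpair
    have hS0 : ∀ i, 0 ≤ ∑' j, ws i j (x j) :=
      fun i => tsum_nonneg (fun j => hwspos i j _ (hxpos j))
    have hC0 : (0:ℝ) ≤ C := le_trans (hS0 0) (hC 0)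
    have hcompeq : ∀ m, xs m |T a m| = |a (idx m)| * xs m (x (pos m)) := by
      intro m
      rw [habs a ha m, map_smul, smul_eq_mul]
    have hgcomp : ∀ p : Σ _ : ℕ, ℕ,
        xs (e p) |T a (e p)| = |a p.1| * xs (N p.1 p.2) (x p.2) := by
      intro p
      rw [hcompeq (e p)]
      have h1 : e p = N p.1 p.2 := rfl
      rw [h1, hidxN, hposN]
    have hg0 : ∀ p : Σ _ : ℕ, ℕ, 0 ≤ |a p.1| * xs (N p.1 p.2) (x p.2) :=
      fun p => mul_nonneg (abs_nonneg _) (hxp _ _ (hxpos _))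
    have hfib : ∀ i, Summable fun j => |a i| * xs (N i j) (x j) := by
      intro i
      have h1 := hxmem (ws i) (hwseps i) (hwspos i)
      exact ((h1.congr (fun j => by rw [abs_of_nonneg (hxpos j)])).mul_left _)
    have hrowval : ∀ i, (∑' j, |a i| * xs (N i j) (x j)) = |a i| * ∑' j, xs (N i j) (x j) :=
      fun i => tsum_mul_left
    have hrow : Summable fun i => ∑' j, |a i| * xs (N i j) (x j) := by
      refine Summable.of_nonneg_of_le
        (fun i => tsum_nonneg fun j => mul_nonneg (abs_nonneg _) (hxp _ _ (hxpos _)))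
        (fun i => ?_) (ha.mul_right C)
      rw [hrowval i]
      exact mul_le_mul_of_nonneg_left (hC i) (abs_nonneg _)
    have hgsum : Summable (fun p : Σ _ : ℕ, ℕ => |a p.1| * xs (N p.1 p.2) (x p.2)) :=
      (summable_sigma_of_nonneg hg0).mpr ⟨hfib, hrow⟩
    have hcomp : Summable ((fun m => xs m |T a m|) ∘ e) :=
      hgsum.congr (fun p => (hgcomp p).symm)
    have hsum1 : Summable (fun m => xs m |T a m|) := e.summable_iff.mp hcomp
    refine ⟨hsum1, hrow.congr (fun i => by rw [hrowval i]), ?_⟩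
    calc ∑' m, xs m |T a m| = ∑' p, xs (e p) |T a (e p)| :=
        (e.tsum_eq (fun m => xs m |T a m|)).symm
      _ = ∑' p : Σ _ : ℕ, ℕ, |a p.1| * xs (N p.1 p.2) (x p.2) := tsum_congr hgcomp
      _ = ∑' i, ∑' j, |a i| * xs (N i j) (x j) := Summable.tsum_sigma hgsum
      _ = ∑' i, |a i| * ∑' j, xs (N i j) (x j) := tsum_congr hrowval
  have hpibdd : BddAbove (B.piSet x) := B.piSet_bddAbove hs hxmem hxpos
  have hpinn : 0 ≤ B.piNorm x := le_csSup hpibdd (B.zero_mem_piSet x)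
  refine ⟨?_, ?_, ?_, ?_, ?_⟩
  · -- well-defined and bounded
    intro a ha
    constructor
    · intro xs hxe hxp
      exact (key a ha xs hxe hxp).1
    · rw [B.piNorm_eq (T a)]
      refine Real.sSup_le ?_ (mul_nonneg hpinn (tsum_nonneg fun i => abs_nonneg _))
      rintro r ⟨xs, hxe, hxp, hxn, rfl⟩
      obtain ⟨hsum1, hsum2, heq⟩ := key a ha xs hxe hxp
      rw [heq]
      have hSle : ∀ i, ∑' j, xs (N i j) (x j) ≤ B.piNorm x := by
        intro i
        refine le_csSup hpibdd ⟨fun j => xs (N i j), ?_, fun j => hxp (N i j), ?_, ?_⟩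
        · intro v hv
          exact (L.dual_subseq (fun j => absApply (xs j) v) (N i) (hxe v hv) (hmono i)).1
        · rw [B.epsNorm_eq]
          refine Real.sSup_le ?_ zero_le_one
          rintro r' ⟨v, hv, hv1, rfl⟩
          have heqb : (fun j => absApply (xs j) v) = fun j => xs j v :=
            funext fun j => absApply_pos_eq (hxp j) hv
          have heqb2 : (fun j => absApply ((fun j => xs (N i j)) j) v) =
              fun j => xs (N i j) v :=
            funext fun j => absApply_pos_eq (hxp (N i j)) hv
          have hsub := L.dual_subseq (fun j => absApply (xs j) v) (N i) (hxe v hv) (hmono i)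
          rw [heqb] at hsub
          have h2 : B.knorm (fun j => absApply (xs j) v) ≤ 1 :=
            le_trans (le_csSup (B.epsSet_bddAbove hs hxe hxp) ⟨v, hv, hv1, rfl⟩) hxn
          rw [heqb] at h2
          have h3 : B.knorm (fun j => xs (N i j) v) ≤ B.knorm (fun j => xs j v) := hsub.2
          rw [heqb2]
          exact le_trans h3 h2
        · exact (tsum_congr (fun j => by rw [abs_of_nonneg (hxpos j)])).symm
      calc ∑' i, |a i| * ∑' j, xs (N i j) (x j)
          ≤ ∑' i, |a i| * B.piNorm x :=
            Summable.tsum_le_tsum (fun i => mul_le_mul_of_nonneg_left (hSle i) (abs_nonneg _))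
              hsum2 (ha.mul_right _)
        _ = (∑' i, |a i|) * B.piNorm x := tsum_mul_right
        _ = B.piNorm x * ∑' i, |a i| := mul_comm _ _
  · -- additive
    intro a b ha hb
    have hab : Summable fun i => |(a + b) i| :=
      Summable.of_nonneg_of_le (fun i => abs_nonneg _) (fun i => abs_add_le _ _) (ha.add hb)
    funext m
    have h1 : (T a + T b) m = T a m + T b m := rfl
    rw [hTval _ hab m, h1, hTval a ha m, hTval b hb m]
    show (a + b) (idx m) • x (pos m) = _
    rw [Pi.add_apply, add_smul]
  · -- homogeneous
    intro r a ha
    have hra : Summable fun i => |(r • a) i| := by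
      refine (ha.mul_left |r|).congr (fun i => ?_)
      show |r| * |a i| = |(r • a) i|
      rw [Pi.smul_apply, smul_eq_mul, abs_mul]
    funext m
    have h1 : (r • T a) m = r • T a m := rfl
    rw [hTval _ hra m, h1, hTval a ha m]
    show (r • a) (idx m) • x (pos m) = _
    rw [Pi.smul_apply, smul_eq_mul, smul_smul]
  · -- injective
    intro a b ha hb hTab
    funext i
    have h1 := congrFun hTab (N i 0)
    rw [hTval a ha (N i 0), hTval b hb (N i 0), hidxN, hposN] at h1
    by_contra hne
    have h2 : (a i - b i) • x 0 = 0 := by rw [sub_smul, h1, sub_self]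
    have h3 : a i - b i ≠ 0 := sub_ne_zero.mpr hne
    have h4 : x 0 = (a i - b i)⁻¹ • ((a i - b i) • x 0) := by
      rw [smul_smul, inv_mul_cancel₀ h3, one_smul]
    rw [h2, smul_zero] at h4
    exact hxne 0 h4
  · -- lattice homomorphism
    intro a b ha hb
    have hmin : Summable fun i => |(a ⊓ b) i| := by
      refine Summable.of_nonneg_of_le (fun i => abs_nonneg _) (fun i => ?_) (ha.add hb)
      show |min (a i) (b i)| ≤ |a i| + |b i|
      rcases le_total (a i) (b i) with h | h
      · rw [min_eq_left h]; linarith [abs_nonneg (b i)]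
      · rw [min_eq_right h]; linarith [abs_nonneg (a i)]
    funext m
    have hsm : ∀ c d : ℝ, c ≤ d → c • x (pos m) ≤ d • x (pos m) := by
      intro c d hcd
      have h1 : 0 ≤ (d - c) • x (pos m) := smul_nonneg (sub_nonneg.mpr hcd) (hxpos _)
      rw [sub_smul] at h1
      exact sub_nonneg.mp h1
    have h1 : (T a ⊓ T b) m = T a m ⊓ T b m := rfl
    rw [hTval _ hmin m, h1, hTval a ha m, hTval b hb m]
    show (a ⊓ b) (idx m) • x (pos m) = _
    rw [Pi.inf_apply]
    rcases le_total (a (idx m)) (b (idx m)) with h | h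
    · rw [inf_eq_left.mpr h, inf_eq_left.mpr (hsm _ _ h)]
    · rw [inf_eq_right.mpr h, inf_eq_right.mpr (hsm _ _ h)]
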